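/- Let F be an infinite field, n ≥ 3, and let z_1,…,z_k be variables of nonzero degrees g_1,…,g_k ∈ Z_n with g_1 + ⋯ + g_k ≤ n − 1 (as integers in {1,…,n−1}), and y_1,…,y_m degree-0 variables. For each composition (t_1,…,t_k) of m into k nonnegative parts, let c_{(t_1,…,t_k)} = [z_1, y_1,…,y_{t_1}, z_2, y_{t_1+1},…,y_{t_1+t_2}, z_3, …, z_k, y_{t_1+⋯+t_{k−1}+1},…,y_m] (left-normed). Then these multilinear commutators, over all such compositions, are linearly independent modulo the ideal of Z_n-graded identities of UT_n(F)^{(-)} with its canonical Z_n-grading: no nontrivial F-linear combination of them is a Z_n-graded identity of UT_n(F)^{(-)}. -/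

import Mathlib

open FreeLieAlgebra

/-- The free `ℤ/n`-graded Lie algebra over `F`: the free Lie algebra on countably many
variables of each homogeneous degree `g : ZMod n`; the variable `(g, i)` is the `i`-th
variable of degree `g`. -/
abbrev FreeGLie (F : Type) [Field F] (n : ℕ) := FreeLieAlgebra F (ZMod n × ℕ)

/-- Homogeneous Lie monomials (bracket words) of degree `g`. -/
inductive HomWord (F : Type) [Field F] (n : ℕ) : ZMod n → FreeGLie F n → Prop
  | of (g : ZMod n) (i : ℕ) : HomWord F n g (FreeLieAlgebra.of F (g, i))
  | bracket {g h : ZMod n} {x y : FreeGLie F n} :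
      HomWord F n g x → HomWord F n h y → HomWord F n (g + h) ⁅x, y⁆

/-- The homogeneous component of degree `g` of the free graded Lie algebra. -/
noncomputable def homComp (F : Type) [Field F] (n : ℕ) (g : ZMod n) : Submodule F (FreeGLie F n) :=
  Submodule.span F {x | HomWord F n g x}

/-- A graded substitution sends each variable of degree `g` to a homogeneous element
of degree `g`; it induces a grading-preserving endomorphism via `FreeLieAlgebra.lift`,
and every grading-preserving endomorphism arises this way. -/
def IsGradedSubst (F : Type) [Field F] (n : ℕ) (s : ZMod n × ℕ → FreeGLie F n) : Prop :=
  ∀ g i, s (g, i) ∈ homComp F n g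

/-- `S` is a `T`-ideal: the carrier of a Lie ideal of the free graded Lie algebra which is
stable under all grading-preserving endomorphisms. -/
structure IsTIdeal (F : Type) [Field F] (n : ℕ) (S : Set (FreeGLie F n)) : Prop where
  isIdeal : ∃ J : LieIdeal F (FreeGLie F n), S = ↑J
  substClosed : ∀ s, IsGradedSubst F n s → ∀ x ∈ S, FreeLieAlgebra.lift F s x ∈ S

/-- The smallest `T`-ideal containing `S`. -/
def TClosure (F : Type) [Field F] (n : ℕ) (S : Set (FreeGLie F n)) : Set (FreeGLie F n) :=
  ⋂₀ {T | IsTIdeal F n T ∧ S ⊆ T}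

/-- The degree-`g` component of the canonical `ZMod n`-grading of `UT_n(F)⁽⁻⁾`:
the span of the matrix units `e_{ij}` with `i ≤ j` and `j - i = g` in `ZMod n`. -/
def Lcomp (F : Type) [Field F] (n : ℕ) (g : ZMod n) : Submodule F (Matrix (Fin n) (Fin n) F) :=
  Submodule.span F {A | ∃ i j : Fin n, i ≤ j ∧ ((j : ℕ) : ZMod n) - ((i : ℕ) : ZMod n) = g ∧
    A = Matrix.single i j 1}

attribute [local instance 100] LieRing.ofAssociativeRing

/-- The set of `ZMod n`-graded identities of `UT_n(F)⁽⁻⁾` (with commutator bracket),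
i.e. the elements of the free graded Lie algebra vanishing under every substitution that
sends each variable of degree `g` into the component `Lcomp F n g`. -/
def gradedId (F : Type) [Field F] (n : ℕ) : Set (FreeGLie F n) :=
  {f | ∀ v : ZMod n × ℕ → Matrix (Fin n) (Fin n) F,
    (∀ g i, v (g, i) ∈ Lcomp F n g) → FreeLieAlgebra.lift F v f = 0}

/-- The left-normed bracket `[x, l₁, l₂, …]`. -/
noncomputable def lnw (F : Type) [Field F] (n : ℕ) (x : FreeGLie F n)
    (l : List (FreeGLie F n)) : FreeGLie F n :=
  l.foldl (fun a b => ⁅a, b⁆) x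

/-- The degree-0 variable `y_i`. -/
noncomputable def yv (F : Type) [Field F] (n : ℕ) (i : ℕ) : FreeGLie F n :=
  FreeLieAlgebra.of F ((0 : ZMod n), i)

/-- The variable `z_j` of nonzero degree `g j` (the `j`-th of the `k+1` fixed variables of
nonzero degree; distinct `j` give distinct variables). -/
noncomputable def zvG (F : Type) [Field F] (n k : ℕ) (g : Fin (k + 1) → ZMod n)
    (j : Fin (k + 1)) : FreeGLie F n :=
  FreeLieAlgebra.of F (g j, j.val)

/-- For a composition `t = (t₁,…,t_{k+1})` of `m`, the multilinear left-normed commutator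
`c_t = [z₁, y₁,…,y_{t₁}, z₂, y_{t₁+1},…,y_{t₁+t₂}, …, z_{k+1}, y_{t₁+⋯+t_k+1},…,y_m]`. -/
noncomputable def cComp (F : Type) [Field F] (n k : ℕ) (g : Fin (k + 1) → ZMod n)
    (t : Fin (k + 1) → ℕ) : FreeGLie F n :=
  lnw F n (zvG F n k g 0)
    ((List.finRange (k + 1)).flatMap fun s =>
      (if s = 0 then [] else [zvG F n k g s]) ++
        ((List.range (t s)).map fun r =>
          yv F n ((∑ s' ∈ Finset.univ.filter (· < s), t s') + r)))

open Matrix FreeLieAlgebra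

namespace S16

/-! ### Partial sums of functions on `Fin (k+1)` -/

def psum (k : ℕ) (f : Fin (k + 1) → ℕ) (c : ℕ) : ℕ :=
  ∑ s' ∈ Finset.univ.filter (fun s' : Fin (k + 1) => s'.val < c), f s'

lemma psum_zero (k : ℕ) (f : Fin (k + 1) → ℕ) : psum k f 0 = 0 := by
  simp [psum]

def fN (k : ℕ) (f : Fin (k + 1) → ℕ) (c : ℕ) : ℕ :=
  if h : c < k + 1 then f ⟨c, h⟩ else 0

lemma psum_succ (k : ℕ) (f : Fin (k + 1) → ℕ) (c : ℕ) :
    psum k f (c + 1) = psum k f c + fN k f c := by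
  unfold psum fN
  by_cases h : c < k + 1
  · rw [dif_pos h]
    have : Finset.univ.filter (fun s' : Fin (k + 1) => s'.val < c + 1) =
        insert ⟨c, h⟩ (Finset.univ.filter (fun s' : Fin (k + 1) => s'.val < c)) := by
      ext s'
      simp only [Finset.mem_filter, Finset.mem_univ, true_and, Finset.mem_insert, Fin.ext_iff]
      omega
    rw [this, Finset.sum_insert (by simp), add_comm]
  · rw [dif_neg h]
    have hset : Finset.univ.filter (fun s' : Fin (k + 1) => s'.val < c + 1) =
        Finset.univ.filter (fun s' : Fin (k + 1) => s'.val < c) := by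
      ext s'; have := s'.isLt; simp only [Finset.mem_filter, Finset.mem_univ, true_and]; omega
    rw [add_zero, hset]

lemma psum_mono (k : ℕ) (f : Fin (k + 1) → ℕ) : Monotone (psum k f) := by
  intro c c' hcc
  exact Finset.sum_le_sum_of_subset (by
    intro x hx
    simp only [Finset.mem_filter, Finset.mem_univ, true_and] at *
    omega)

lemma psum_top (k : ℕ) (f : Fin (k + 1) → ℕ) : psum k f (k + 1) = ∑ j, f j := by
  unfold psum
  congr 1
  ext s'
  simp [s'.isLt, Nat.le_of_lt_succ s'.isLt]

lemma psum_le (k : ℕ) (f : Fin (k + 1) → ℕ) (c : ℕ) : psum k f c ≤ ∑ j, f j := by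
  rw [← psum_top k f]
  exact Finset.sum_le_sum_of_subset (by
    intro x hx
    simp [x.isLt, Nat.le_of_lt_succ x.isLt])

/-! ### The indices -/

variable {F : Type} [Field F] {n k : ℕ}

def aP (k : ℕ) (g : Fin (k + 1) → ZMod n) (c : ℕ) : ℕ := psum k (fun j => (g j).val) c

def pN [NeZero n] (g : Fin (k + 1) → ZMod n) (c : ℕ) : Fin n :=
  ⟨aP k g c % n, Nat.mod_lt _ (Nat.pos_of_ne_zero (NeZero.ne n))⟩

section Indices

variable [NeZero n] (g : Fin (k + 1) → ZMod n)

lemma aP_lt (hsum : ∑ j, (g j).val ≤ n - 1) (c : ℕ) : aP k g c < n := by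
  have h1 := psum_le k (fun j => (g j).val) c
  have h2 : 0 < n := Nat.pos_of_ne_zero (NeZero.ne n)
  unfold aP; omega

lemma pN_val (hsum : ∑ j, (g j).val ≤ n - 1) (c : ℕ) :
    (pN g c).val = aP k g c := by
  simp [pN, Nat.mod_eq_of_lt (aP_lt g hsum c)]

lemma aP_strict (hg : ∀ j, g j ≠ 0) {c c' : ℕ} (hcc : c < c') (hc' : c' ≤ k + 1) :
    aP k g c < aP k g c' := by
  have key : ∀ d, d < k + 1 → aP k g d < aP k g (d + 1) := by
    intro d hd
    have : aP k g (d + 1) = aP k g d + fN k (fun j => (g j).val) d := psum_succ ..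
    rw [this]
    have h0 : fN k (fun j => (g j).val) d = (g ⟨d, hd⟩).val := by simp [fN, hd]
    have h1 : (g ⟨d, hd⟩).val ≠ 0 := by
      simp [ZMod.val_eq_zero, hg]
    omega
  have : ∀ e, c + e ≤ k + 1 → 0 < e → aP k g c < aP k g (c + e) := by
    intro e
    induction e with
    | zero => omega
    | succ e ih =>
      intro he _
      rcases Nat.eq_zero_or_pos e with he0 | hep
      · subst he0; exact key c (by omega)
      · exact lt_of_lt_of_le (ih (by omega) hep)
          (psum_mono k _ (by omega))
  have := this (c' - c) (by omega) (by omega)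
  rwa [Nat.add_sub_cancel' (le_of_lt hcc)] at this

end Indices

/-! ### Matrix bracket lemmas -/

theorem br_diag (a b : Fin n) (α : F) (d : Fin n → F) :
    ⁅α • Matrix.single a b (1:F), Matrix.diagonal d⁆ = (α * (d b - d a)) • Matrix.single a b 1 := by
  rw [Ring.lie_def]
  ext i j
  by_cases hi : i = a <;> by_cases hj : j = b <;>
    simp [hi, hj, mul_diagonal, diagonal_mul, Matrix.single, Matrix.smul_apply, mul_sub, and_comm] <;>
    (try ring) <;> (split_ifs <;> simp_all <;> try ring)

theorem br_std (a b c : Fin n) (α : F) (hac : a ≠ c) :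
    ⁅α • Matrix.single a b (1:F), Matrix.single b c (1:F)⁆ = α • Matrix.single a c 1 := by
  rw [Ring.lie_def, Matrix.smul_mul, Matrix.mul_smul, Matrix.single_mul_single_same,
    show Matrix.single b c (1:F) * Matrix.single a b 1 = 0 from
      Matrix.single_mul_single_of_ne (1:F) b c a (Ne.symm hac) 1]
  simp

/-! ### fold lemmas -/

lemma foldl_lie (φ : FreeGLie F n →ₗ⁅F⁆ Matrix (Fin n) (Fin n) F)
    (x : FreeGLie F n) (l : List (FreeGLie F n)) :
    φ (l.foldl (fun a b => ⁅a, b⁆) x) = (l.map φ).foldl (fun a b => ⁅a, b⁆) (φ x) := by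
  induction l generalizing x with
  | nil => rfl
  | cons hd tl ih => simp only [List.foldl_cons, List.map_cons, ih, LieHom.map_lie]

lemma foldl_flatMap {α β γ : Type*} (f : α → List β) (op : γ → β → γ) (l : List α) (x : γ) :
    (l.flatMap f).foldl op x = l.foldl (fun acc a => (f a).foldl op acc) x := by
  induction l generalizing x with
  | nil => rfl
  | cons hd tl ih => simp [List.foldl_append, ih]

lemma fold_y (δ : ℕ → Fin n → F) (a b : Fin n) (α : F) (l : List ℕ) :
    (l.map fun i => Matrix.diagonal (δ i)).foldl (fun A B => ⁅A, B⁆) (α • Matrix.single a b 1)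
      = (α * (l.map fun i => (δ i b - δ i a)).prod) • Matrix.single a b 1 := by
  induction l generalizing α with
  | nil => simp
  | cons hd tl ih =>
    simp only [List.map_cons, List.foldl_cons, br_diag, List.prod_cons, ih]
    ring_nf

end S16

namespace S16

open Matrix FreeLieAlgebra

variable {F : Type} [Field F] {n k : ℕ}

lemma list_prod_range {M : Type*} [CommMonoid M] (f : ℕ → M) (q : ℕ) :
    ((List.range q).map f).prod = ∏ i ∈ Finset.range q, f i := by
  induction q with
  | zero => simp
  | succ q ih =>
    rw [List.range_succ, List.map_append, List.prod_append, Finset.prod_range_succ, ih]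
    simp

lemma fold_y' (δ : ℕ → Fin n → F) (a b : Fin n) (α : F) (o q : ℕ) :
    ((List.range q).map fun r => Matrix.diagonal (δ (o + r))).foldl (fun A B => ⁅A, B⁆)
        (α • Matrix.single a b 1)
      = (α * ∏ r ∈ Finset.range q, (δ (o + r) b - δ (o + r) a)) • Matrix.single a b 1 := by
  induction q with
  | zero => simp
  | succ q ih =>
    rw [List.range_succ, List.map_append, List.foldl_append, ih]
    simp only [List.map_cons, List.map_nil, List.foldl_cons, List.foldl_nil, br_diag,
      Finset.prod_range_succ]
    congr 1
    ring

/-! ### The substitution -/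

noncomputable def subst [NeZero n] (g : Fin (k + 1) → ZMod n) (δ : ℕ → Fin n → F) :
    ZMod n × ℕ → Matrix (Fin n) (Fin n) F := fun x =>
  if x.1 = 0 then Matrix.diagonal (δ x.2)
  else if hik : x.2 < k + 1 then
    (if x.1 = g ⟨x.2, hik⟩ then Matrix.single (pN g x.2) (pN g (x.2 + 1)) 1 else 0)
  else 0

lemma diag_mem (d : Fin n → F) : Matrix.diagonal d ∈ Lcomp F n 0 := by
  have hd : Matrix.diagonal d = ∑ q : Fin n, d q • Matrix.single q q 1 := by
    ext i j
    by_cases hij : i = j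
    · subst hij
      simp [Matrix.sum_apply, Matrix.smul_apply, Matrix.single, Matrix.diagonal,
        Finset.sum_ite_eq]
    · rw [Matrix.diagonal_apply_ne _ hij, Matrix.sum_apply, Finset.sum_eq_zero]
      intro q _
      rw [Matrix.smul_apply, smul_eq_mul]
      rw [show Matrix.single q q (1:F) i j = 0 by
        simp only [Matrix.single, Matrix.of_apply]
        rw [if_neg]; rintro ⟨rfl, rfl⟩; exact hij rfl]
      ring
  rw [hd]
  refine Submodule.sum_mem _ fun q _ => Submodule.smul_mem _ _ (Submodule.subset_span ?_)
  exact ⟨q, q, le_refl _, by simp, rfl⟩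

lemma z_mem [NeZero n] (g : Fin (k + 1) → ZMod n) (hsum : ∑ j, (g j).val ≤ n - 1)
    (c : ℕ) (hc : c < k + 1) :
    Matrix.single (pN g c) (pN g (c + 1)) (1 : F) ∈ Lcomp F n (g ⟨c, hc⟩) := by
  apply Submodule.subset_span
  refine ⟨pN g c, pN g (c + 1), ?_, ?_, rfl⟩
  · rw [Fin.le_def, pN_val g hsum, pN_val g hsum]
    exact psum_mono k _ (by omega)
  · rw [pN_val g hsum, pN_val g hsum]
    have hstep : aP k g (c + 1) = aP k g c + (g ⟨c, hc⟩).val := by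
      have := psum_succ k (fun j => (g j).val) c
      have h0 : fN k (fun j => (g j).val) c = (g ⟨c, hc⟩).val := by simp [fN, hc]
      unfold aP
      omega
    rw [hstep]
    push_cast
    rw [add_sub_cancel_left, ZMod.natCast_val, ZMod.cast_id]

lemma subst_mem [NeZero n] (g : Fin (k + 1) → ZMod n) (hsum : ∑ j, (g j).val ≤ n - 1)
    (δ : ℕ → Fin n → F) : ∀ h i, subst g δ (h, i) ∈ Lcomp F n h := by
  intro h i
  unfold subst
  by_cases h0 : h = 0
  · subst h0; rw [if_pos rfl]; exact diag_mem _
  · rw [if_neg h0]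
    by_cases hik : i < k + 1
    · rw [dif_pos hik]
      by_cases heq : h = g ⟨i, hik⟩
      · rw [if_pos heq, heq]; exact z_mem g hsum i hik
      · rw [if_neg heq]; exact Submodule.zero_mem _
    · rw [dif_neg hik]; exact Submodule.zero_mem _

lemma lift_y [NeZero n] (g : Fin (k + 1) → ZMod n) (δ : ℕ → Fin n → F) (i : ℕ) :
    FreeLieAlgebra.lift F (subst g δ) (yv F n i) = Matrix.diagonal (δ i) := by
  rw [yv, lift_of_apply]
  simp [subst]

lemma lift_z [NeZero n] (g : Fin (k + 1) → ZMod n) (hg : ∀ j, g j ≠ 0)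
    (δ : ℕ → Fin n → F) (j : Fin (k + 1)) :
    FreeLieAlgebra.lift F (subst g δ) (zvG F n k g j)
      = Matrix.single (pN g j.val) (pN g (j.val + 1)) 1 := by
  rw [zvG, lift_of_apply]
  unfold subst
  rw [if_neg (hg j), dif_pos j.isLt, if_pos (by rw [Fin.eta])]

/-! ### Blocks and block index -/

noncomputable def mblk [NeZero n] (g : Fin (k + 1) → ZMod n) (t : Fin (k + 1) → ℕ)
    (δ : ℕ → Fin n → F) (s : ℕ) : List (Matrix (Fin n) (Fin n) F) :=
  (if s = 0 then [] else [Matrix.single (pN g s) (pN g (s + 1)) 1]) ++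
    ((List.range (fN k t s)).map fun r => Matrix.diagonal (δ (psum k t s + r)))

def sigma (k : ℕ) (t : Fin (k + 1) → ℕ) (i : ℕ) : ℕ :=
  ((Finset.range (k + 1)).filter (fun s => psum k t (s + 1) ≤ i)).card

lemma sigma_block (t : Fin (k + 1) → ℕ) {s i : ℕ} (hs : s < k + 1)
    (h1 : psum k t s ≤ i) (h2 : i < psum k t (s + 1)) : sigma k t i = s := by
  unfold sigma
  have hset : (Finset.range (k + 1)).filter (fun s' => psum k t (s' + 1) ≤ i)
      = Finset.range s := by
    ext s'
    simp only [Finset.mem_filter, Finset.mem_range]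
    constructor
    · rintro ⟨hs', hle⟩
      by_contra hss
      push_neg at hss
      have : psum k t (s + 1) ≤ psum k t (s' + 1) := psum_mono k t (by omega)
      omega
    · intro hss
      refine ⟨by omega, le_trans (psum_mono k t (by omega : s' + 1 ≤ s)) h1⟩
  rw [hset, Finset.card_range]

lemma sigma_le (t : Fin (k + 1) → ℕ) {i : ℕ} (hi : i < psum k t (k + 1)) :
    sigma k t i ≤ k := by
  unfold sigma
  have hsub : (Finset.range (k + 1)).filter (fun s => psum k t (s + 1) ≤ i)
      ⊆ Finset.range k := by
    intro s hsmem
    simp only [Finset.mem_filter, Finset.mem_range] at *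
    rcases hsmem with ⟨hs1, hs2⟩
    by_contra hsk
    have : s = k := by omega
    subst this
    omega
  have := Finset.card_le_card hsub
  rwa [Finset.card_range] at this

lemma block_cover (t : Fin (k + 1) → ℕ) :
    ∀ c i, i < psum k t c →
      ∃ s, s < c ∧ s < k + 1 ∧ psum k t s ≤ i ∧ i < psum k t (s + 1) := by
  intro c
  induction c with
  | zero => intro i hi; rw [psum_zero] at hi; omega
  | succ c ih =>
    intro i hi
    by_cases hic : i < psum k t c
    · obtain ⟨s, h1, h2, h3, h4⟩ := ih i hic
      exact ⟨s, by omega, h2, h3, h4⟩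
    · push_neg at hic
      have hck : c < k + 1 := by
        by_contra hck
        push_neg at hck
        have hps := psum_succ k t c
        have h0 : fN k t c = 0 := by simp only [fN]; rw [dif_neg (by omega)]
        omega
      exact ⟨c, by omega, hck, hic, hi⟩

end S16

namespace S16

open Matrix FreeLieAlgebra

variable {F : Type} [Field F] {n k : ℕ}

lemma pN_ne [NeZero n] (g : Fin (k + 1) → ZMod n) (hg : ∀ j, g j ≠ 0)
    (hsum : ∑ j, (g j).val ≤ n - 1) {c c' : ℕ} (hcc : c < c') (hc' : c' ≤ k + 1) :
    pN g c ≠ pN g c' := by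
  intro hEq
  have hv : (pN g c).val = (pN g c').val := by rw [hEq]
  rw [pN_val g hsum, pN_val g hsum] at hv
  have := aP_strict g hg hcc hc'
  omega

lemma fold_blocks [NeZero n] (g : Fin (k + 1) → ZMod n) (hg : ∀ j, g j ≠ 0)
    (hsum : ∑ j, (g j).val ≤ n - 1) (t : Fin (k + 1) → ℕ) (δ : ℕ → Fin n → F) :
    ∀ c, 1 ≤ c → c ≤ k + 1 →
      ((List.range c).flatMap (mblk g t δ)).foldl (fun A B => ⁅A, B⁆)
          (Matrix.single (pN g 0) (pN g 1) 1)
        = (∏ i ∈ Finset.range (psum k t c),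
            (δ i (pN g (sigma k t i + 1)) - δ i (pN g 0))) • Matrix.single (pN g 0) (pN g c) 1 := by
  intro c
  induction c with
  | zero => omega
  | succ c ih =>
    intro _ hc1
    rcases Nat.eq_zero_or_pos c with rfl | hcpos
    · -- base case : one block
      rw [show List.range (0+1) = [0] by rfl, List.flatMap_cons, List.flatMap_nil, List.append_nil,
        mblk, if_pos rfl, List.nil_append,
        show Matrix.single (pN g 0) (pN g 1) (1:F) = (1:F) • Matrix.single (pN g 0) (pN g 1) 1
          from (one_smul F _).symm,
        fold_y']
      congr 1
      rw [one_mul]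
      have hp1 : psum k t (0 + 1) = psum k t 0 + fN k t 0 := psum_succ k t 0
      rw [show psum k t 1 = psum k t 0 + fN k t 0 from hp1, psum_zero, zero_add]
      apply Finset.prod_congr rfl
      intro r hr
      rw [Finset.mem_range] at hr
      have hσ : sigma k t r = 0 := by
        apply sigma_block t (by omega) (by rw [psum_zero]; omega)
        rw [hp1, psum_zero, zero_add]; exact hr
      rw [hσ]
      norm_num
      exact (one_smul F _).symm
    · -- inductive step
      have hck : c < k + 1 := by omega
      rw [List.range_succ, List.flatMap_append, List.flatMap_cons, List.flatMap_nil,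
        List.append_nil, List.foldl_append, ih (by omega) (by omega),
        mblk, if_neg (by omega), List.singleton_append, List.foldl_cons,
        br_std _ _ _ _ (pN_ne g hg hsum (by omega : 0 < c + 1) (by omega)),
        fold_y']
      congr 1
      have hp1 : psum k t (c + 1) = psum k t c + fN k t c := psum_succ k t c
      rw [hp1, Finset.prod_range_add]
      congr 1
      apply Finset.prod_congr rfl
      intro r hr
      rw [Finset.mem_range] at hr
      have hσ : sigma k t (psum k t c + r) = c := by
        apply sigma_block t hck (by omega)
        rw [hp1]; omega
      rw [hσ]

lemma off_eq (t : Fin (k + 1) → ℕ) (s : Fin (k + 1)) :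
    (∑ s' ∈ Finset.univ.filter (· < s), t s') = psum k t s.val := by
  unfold psum
  apply Finset.sum_congr _ (fun _ _ => rfl)
  apply Finset.filter_congr
  intro x _
  exact Fin.lt_def

lemma eval_cComp [NeZero n] (g : Fin (k + 1) → ZMod n) (hg : ∀ j, g j ≠ 0)
    (hsum : ∑ j, (g j).val ≤ n - 1) (t : Fin (k + 1) → ℕ) (δ : ℕ → Fin n → F) :
    FreeLieAlgebra.lift F (subst g δ) (cComp F n k g t)
      = (∏ i ∈ Finset.range (psum k t (k + 1)),
          (δ i (pN g (sigma k t i + 1)) - δ i (pN g 0))) •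
          Matrix.single (pN g 0) (pN g (k + 1)) 1 := by
  rw [cComp, lnw, foldl_lie]
  have hz0 : FreeLieAlgebra.lift F (subst g δ) (zvG F n k g 0)
      = Matrix.single (pN g 0) (pN g 1) 1 := by
    rw [lift_z g hg δ 0]
    norm_num
  have hblock : ∀ s : Fin (k + 1),
      (((if s = 0 then [] else [zvG F n k g s]) ++
        ((List.range (t s)).map fun r =>
          yv F n ((∑ s' ∈ Finset.univ.filter (· < s), t s') + r))).map
            (FreeLieAlgebra.lift F (subst g δ)))
      = mblk g t δ s.val := by
    intro s
    rw [List.map_append, mblk]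
    congr 1
    · by_cases hs0 : s = 0
      · rw [if_pos hs0, if_pos (by rw [hs0]; rfl), List.map_nil]
      · rw [if_neg hs0, if_neg (by intro h; exact hs0 (Fin.ext (by simp [h]))), List.map_cons, List.map_nil,
          lift_z g hg δ s]
    · rw [List.map_map]
      have ht : fN k t s.val = t s := by simp [fN, s.isLt]
      rw [ht, off_eq t s]
      apply List.map_congr_left
      intro r _
      simp only [Function.comp_apply]
      rw [lift_y]
  have hmap : (((List.finRange (k + 1)).flatMap fun s =>
        (if s = 0 then [] else [zvG F n k g s]) ++
          ((List.range (t s)).map fun r =>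
            yv F n ((∑ s' ∈ Finset.univ.filter (· < s), t s') + r))).map
              (FreeLieAlgebra.lift F (subst g δ)))
      = (List.range (k + 1)).flatMap (mblk g t δ) := by
    rw [List.map_flatMap]
    have congrFM : ∀ {α γ : Type} (l : List α) (f f' : α → List γ),
        (∀ a ∈ l, f a = f' a) → l.flatMap f = l.flatMap f' := by
      intro α γ l f f' hff
      induction l with
      | nil => rfl
      | cons hd tl ihl =>
        rw [List.flatMap_cons, List.flatMap_cons, hff hd (by simp),
          ihl (fun a ha => hff a (by simp [ha]))]
    rw [congrFM _ _ (fun s => mblk g t δ s.val) (fun s _ => hblock s),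
      ← (show (List.finRange (k + 1)).map Fin.val = List.range (k + 1) from
        List.ext_getElem (by simp) (fun i h1 h2 => by simp)), List.flatMap_map]
  rw [hmap, hz0]
  exact fold_blocks g hg hsum t δ (k + 1) (by omega) le_rfl

end S16

namespace S16

variable {F : Type} [Field F] {n k : ℕ}

lemma t_from_sigma (t : Fin (k + 1) → ℕ) (j : Fin (k + 1)) :
    t j = ((Finset.range (psum k t (k + 1))).filter (fun i => sigma k t i = j.val)).card := by
  have hIco : (Finset.range (psum k t (k + 1))).filter (fun i => sigma k t i = j.val)
      = Finset.Ico (psum k t j.val) (psum k t (j.val + 1)) := by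
    ext i
    simp only [Finset.mem_filter, Finset.mem_range, Finset.mem_Ico]
    constructor
    · rintro ⟨him, hσ⟩
      obtain ⟨sb, hs1, hs2, hs3, hs4⟩ := block_cover t (k + 1) i him
      have hbs : sigma k t i = sb := sigma_block t hs2 hs3 hs4
      rw [hbs] at hσ
      subst hσ
      exact ⟨hs3, hs4⟩
    · rintro ⟨h1, h2⟩
      refine ⟨lt_of_lt_of_le h2 (psum_mono k t (by omega : j.val + 1 ≤ k + 1)), ?_⟩
      exact sigma_block t j.isLt h1 h2
  rw [hIco, Nat.card_Ico]
  have hps := psum_succ k t j.val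
  have hf : fN k t j.val = t j := by simp [fN, j.isLt]
  omega

end S16

/-- Let `n ≥ 3` and `z₁,…,z_{k+1}` have nonzero degrees `g₁,…,g_{k+1}`
with `g₁ + ⋯ + g_{k+1} ≤ n - 1` (as integers in `{1,…,n-1}`). The multilinear commutators
`c_t`, over all compositions `t` of `m` into `k+1` nonnegative parts, are linearly
independent modulo the ideal of `ZMod n`-graded identities of `UT_n(F)⁽⁻⁾`: no nontrivial
`F`-linear combination of them is a graded identity of `UT_n(F)⁽⁻⁾`. -/
theorem stmt16 (F : Type) [Field F] [Infinite F] (n k m : ℕ) (hn : 3 ≤ n)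
    (g : Fin (k + 1) → ZMod n) (hg : ∀ j, g j ≠ 0) (hsum : ∑ j, (g j).val ≤ n - 1)
    (s : Finset (Fin (k + 1) → ℕ)) (hs : ∀ t ∈ s, ∑ j, t j = m)
    (c : (Fin (k + 1) → ℕ) → F)
    (h : (∑ t ∈ s, c t • cComp F n k g t) ∈ gradedId F n) :
    ∀ t ∈ s, c t = 0 := by
  haveI : NeZero n := ⟨by omega⟩
  open S16 in
  -- Step 1: the scalar identity obtained from evaluating at the substitution
  have key : ∀ δ : ℕ → Fin n → F,
      ∑ t ∈ s, c t * ∏ i ∈ Finset.range m,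
        (δ i (pN g (sigma k t i + 1)) - δ i (pN g 0)) = 0 := by
    intro δ
    have h0 := h (subst g δ) (subst_mem g hsum δ)
    rw [show (FreeLieAlgebra.lift F (subst g δ)) (∑ t ∈ s, c t • cComp F n k g t)
        = ∑ t ∈ s, (FreeLieAlgebra.lift F (subst g δ)) (c t • cComp F n k g t) by
      rw [← LieHom.coe_toLinearMap]; exact map_sum _ _ _] at h0
    have hterm : ∀ t ∈ s, (FreeLieAlgebra.lift F (subst g δ)) (c t • cComp F n k g t)
        = (c t * ∏ i ∈ Finset.range m,
            (δ i (pN g (sigma k t i + 1)) - δ i (pN g 0))) •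
            Matrix.single (pN g 0) (pN g (k + 1)) 1 := by
      intro t htmem
      rw [show (FreeLieAlgebra.lift F (subst g δ)) (c t • cComp F n k g t)
          = c t • (FreeLieAlgebra.lift F (subst g δ)) (cComp F n k g t) by
        rw [← LieHom.coe_toLinearMap]; exact map_smul _ _ _]
      rw [eval_cComp g hg hsum t δ,
        show psum k t (k + 1) = m by rw [psum_top]; exact hs t htmem, smul_smul]
    rw [Finset.sum_congr rfl hterm, ← Finset.sum_smul] at h0
    have hE : Matrix.single (pN g 0) (pN g (k + 1)) (1 : F) ≠ 0 := by
      intro hE0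
      have h1 := congrFun (congrFun hE0 (pN g 0)) (pN g (k + 1))
      rw [Matrix.single_apply_same, Matrix.zero_apply] at h1
      exact one_ne_zero h1
    rcases smul_eq_zero.mp h0 with h1 | h1
    · exact h1
    · exact absurd h1 hE
  open S16 in
  intro t₀ ht₀
  -- Step 2: package as a multivariate polynomial identity
  set dd : (Fin (k + 1) → ℕ) → (Fin m →₀ ℕ) := fun t =>
    Finsupp.equivFunOnFinite.symm fun i : Fin m => sigma k t i.val + 1 with hdd
  set P : MvPolynomial (Fin m) F := ∑ t ∈ s, MvPolynomial.monomial (dd t) (c t) with hP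
  have hPeval : ∀ x : Fin m → F, MvPolynomial.eval x P = 0 := by
    intro x
    set lam : ℕ → F := fun i => if h : i < m then x ⟨i, h⟩ else 0 with hlam
    set δ : ℕ → Fin n → F := fun i q =>
      ∑ s' ∈ Finset.range (k + 1), if q = pN g (s' + 1) then lam i ^ (s' + 1) else 0 with hδ
    have hδ0 : ∀ i, δ i (pN g 0) = 0 := by
      intro i
      simp only [hδ]
      apply Finset.sum_eq_zero
      intro s' hs'
      rw [Finset.mem_range] at hs'
      rw [if_neg]
      exact pN_ne g hg hsum (by omega : 0 < s' + 1) (by omega)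
    have hδs : ∀ t ∈ s, ∀ i, i < m →
        δ i (pN g (sigma k t i + 1)) = lam i ^ (sigma k t i + 1) := by
      intro t htm i him
      have hm' : psum k t (k + 1) = m := by rw [psum_top]; exact hs t htm
      have hσk : sigma k t i ≤ k := sigma_le t (by omega)
      simp only [hδ]
      rw [Finset.sum_eq_single_of_mem (sigma k t i) (Finset.mem_range.mpr (by omega))]
      · rw [if_pos rfl]
      · intro s' hs' hne
        rw [Finset.mem_range] at hs'
        rw [if_neg]
        intro hpe
        have hv := congrArg Fin.val hpe
        rw [pN_val g hsum, pN_val g hsum] at hv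
        rcases lt_trichotomy (sigma k t i) s' with hlt | heq | hgt
        · have := aP_strict g hg (show sigma k t i + 1 < s' + 1 by omega) (by omega)
          omega
        · exact hne heq.symm
        · have := aP_strict g hg (show s' + 1 < sigma k t i + 1 by omega) (by omega)
          omega
    have hterm : ∀ t ∈ s, MvPolynomial.eval x (MvPolynomial.monomial (dd t) (c t))
        = c t * ∏ i ∈ Finset.range m,
            (δ i (pN g (sigma k t i + 1)) - δ i (pN g 0)) := by
      intro t htm
      rw [MvPolynomial.eval_monomial]
      congr 1
      rw [Finsupp.prod_fintype _ _ (fun i => pow_zero _),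
        ← Fin.prod_univ_eq_prod_range
          (fun i => δ i (pN g (sigma k t i + 1)) - δ i (pN g 0)) m]
      apply Finset.prod_congr rfl
      intro i _
      rw [hδs t htm i.val i.isLt, hδ0, sub_zero]
      have hdti : (dd t) i = sigma k t i.val + 1 := by
        rw [hdd]
        simp [Finsupp.equivFunOnFinite]; rfl
      rw [hdti]
      simp only [hlam]
      rw [dif_pos i.isLt]
    rw [hP, map_sum, Finset.sum_congr rfl hterm]
    exact key δ
  have hP0 : P = 0 := by
    apply MvPolynomial.funext
    intro x
    rw [hPeval x, map_zero]
  have hco := congrArg (MvPolynomial.coeff (dd t₀)) hP0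
  rw [hP, MvPolynomial.coeff_sum, MvPolynomial.coeff_zero] at hco
  rw [Finset.sum_eq_single_of_mem t₀ ht₀] at hco
  · rwa [MvPolynomial.coeff_monomial, if_pos rfl] at hco
  · intro t htm hne
    rw [MvPolynomial.coeff_monomial, if_neg]
    intro hddeq
    apply hne
    have hfun : (fun i : Fin m => sigma k t i.val + 1)
        = (fun i : Fin m => sigma k t₀ i.val + 1) := by
      apply Finsupp.equivFunOnFinite.symm.injective.eq_iff.mp hddeq
    have hσeq : ∀ i < m, sigma k t i = sigma k t₀ i := by
      intro i him
      have := congrFun hfun ⟨i, him⟩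
      simpa using this
    funext j
    rw [t_from_sigma t j, t_from_sigma t₀ j,
      show psum k t (k + 1) = m by rw [psum_top]; exact hs t htm,
      show psum k t₀ (k + 1) = m by rw [psum_top]; exact hs t₀ ht₀]
    apply Finset.card_bij (fun a _ => a)
    · intro a ha
      simp only [Finset.mem_filter, Finset.mem_range] at *
      exact ⟨ha.1, by rw [← hσeq a ha.1]; exact ha.2⟩
    · intro a _ b _ hab; exact hab
    · intro b hb
      simp only [Finset.mem_filter, Finset.mem_range] at *
      exact ⟨b, ⟨hb.1, by rw [hσeq b hb.1]; exact hb.2⟩, rfl⟩
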